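/- arXiv:1607.04936 — 12 statements merged into one kernel-verified Lean document; each statement's English description precedes it below -/
import Mathlib

section
/- Let V be a vector space with bilinear operations ∘, ∗, [·,·] such that x ∗ y = 2(x ∘ y) for all x,y. Then the nine compatibility conditions (t1)-(t9) of Theorem 3.2 hold if and only if the following five identities hold for all x,y,z ∈ V: (r1) (x∘y)∘z = x∘(y∘z); (r2) x∘(y∘z) = y∘(x∘z); (r3) 2x∘[y,z] = [x∘y,z] + [y,x∘z]; (r4) 2[x,y]∘z = [x,y∘z] - [y,x∘z]; (r5) [x,y]∘z = -x∘[y,z] + y∘[x,z]. -/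
/-- Corollary 3.4 (non-super case): if `x ∗ y = 2 (x ∘ y)`, then conditions
(t1)-(t9) of Theorem 3.2 are equivalent to conditions (r1)-(r5). -/
theorem t_conditions_iff_r_conditions {V : Type*} [AddCommGroup V] [Module ℂ V]
    (c s br : V →ₗ[ℂ] V →ₗ[ℂ] V)
    (hs : ∀ x y : V, s x y = (2:ℂ) • c x y)
    (hLeib : ∀ x y z : V, br x (br y z) = br (br x y) z + br y (br x z)) :
    (∀ x y z : V,
      -- (t1)
      c (c x y) z + s (c x y) z
        = -c x (c y z) + c x (s y z) - (c y (s x z) - s y (s x z)) ∧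
      -- (t2)
      c (c x y) z = -(-s y (c x z) + c y (c x z)) ∧
      -- (t3)
      c (s x y) z = -c x (c y z) + ((2:ℂ) • s y (c x z) - c y (c x z)) ∧
      -- (t4)
      s (c x y) z = -s x (c y z) + s x (s y z) ∧
      -- (t5)
      s (s x y) z = -((2:ℂ) • s x (c y z)) + s x (s y z) + s y (s x z) ∧
      -- (t6)
      -s x (c y z) + s y (c x z) = 0 ∧
      -- (t7)
      s (br x y) z + br (c x y) z
        = -br x (c y z) + br x (s y z) + s x (br y z) - br y (s x z) ∧
      -- (t8)
      c (br x y) z + br (c x y) z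
        = c x (br y z) - (br y (c x z) + c y (br x z) - s y (br x z)) ∧
      -- (t9)
      br (s x y) z = -br x (c y z) + s x (br y z) - (br y (c x z) - s y (br x z)))
    ↔
    (∀ x y z : V,
      -- (r1)
      c (c x y) z = c x (c y z) ∧
      -- (r2)
      c x (c y z) = c y (c x z) ∧
      -- (r3)
      (2:ℂ) • c x (br y z) = br (c x y) z + br y (c x z) ∧
      -- (r4)
      (2:ℂ) • c (br x y) z = br x (c y z) - br y (c x z) ∧
      -- (r5)
      c (br x y) z = -c x (br y z) + c y (br x z)) := by
  constructor
  · intro h x y z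
    obtain ⟨t1, t2, t3, t4, t5, t6, t7, t8, t9⟩ := h x y z
    simp only [hs, map_smul, LinearMap.smul_apply] at t1 t2 t3 t4 t5 t6 t7 t8 t9
    refine ⟨?_, ?_, ?_, ?_, ?_⟩
    · linear_combination (norm := module) t1 - (2:ℂ) • t2
    · linear_combination (norm := module) -t1 + (3:ℂ) • t2
    · linear_combination (norm := module) -t7 + (2:ℂ) • t8 - t9
    · linear_combination (norm := module) (2:ℂ) • t8 - t9
    · linear_combination (norm := module) -t7 + (3:ℂ) • t8 - t9
  · intro h x y z
    obtain ⟨r1, r2, r3, r4, r5⟩ := h x y z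
    simp only [hs, map_smul, LinearMap.smul_apply]
    refine ⟨?_, ?_, ?_, ?_, ?_, ?_, ?_, ?_, ?_⟩
    · linear_combination (norm := module) (3:ℂ) • r1 + (2:ℂ) • r2
    · linear_combination (norm := module) r1 + r2
    · linear_combination (norm := module) (2:ℂ) • r1 + (3:ℂ) • r2
    · linear_combination (norm := module) (2:ℂ) • r1
    · linear_combination (norm := module) (4:ℂ) • r1 + (4:ℂ) • r2
    · linear_combination (norm := module) (-2:ℂ) • r2
    · linear_combination (norm := module) -r3 + r4
    · linear_combination (norm := module) -r3 + r5
    · linear_combination (norm := module) (-2:ℂ) • r3 - r4 + (2:ℂ) • r5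
end

section
/- Let V be a vector space with bilinear operations ∘, ∗, [·,·] where ∗ is trivial (x ∗ y = 0 for all x,y). Then conditions (t1)-(t9) of Theorem 3.2 are equivalent to: (m1) (x∘y)∘z = x∘(y∘z) = 0; (m2) [x∘y,z] = -[x,y∘z] and [x,y∘z] = -[y,x∘z]; (m3) [x,y]∘z + [x∘y,z] = x∘[y,z] - [y,x∘z] - y∘[x,z], for all x,y,z ∈ V. -/
/-- Corollary 3.8 (non-super case): if `∗` is trivial, then conditions (t1)-(t9)
of Theorem 3.2 are equivalent to conditions (m1)-(m3). -/
theorem t_conditions_iff_m_conditions {V : Type*} [AddCommGroup V] [Module ℂ V]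
    (c s br : V →ₗ[ℂ] V →ₗ[ℂ] V)
    (hs : ∀ x y : V, s x y = 0)
    (hLeib : ∀ x y z : V, br x (br y z) = br (br x y) z + br y (br x z)) :
    (∀ x y z : V,
      -- (t1)
      c (c x y) z + s (c x y) z
        = -c x (c y z) + c x (s y z) - (c y (s x z) - s y (s x z)) ∧
      -- (t2)
      c (c x y) z = -(-s y (c x z) + c y (c x z)) ∧
      -- (t3)
      c (s x y) z = -c x (c y z) + ((2:ℂ) • s y (c x z) - c y (c x z)) ∧
      -- (t4)
      s (c x y) z = -s x (c y z) + s x (s y z) ∧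
      -- (t5)
      s (s x y) z = -((2:ℂ) • s x (c y z)) + s x (s y z) + s y (s x z) ∧
      -- (t6)
      -s x (c y z) + s y (c x z) = 0 ∧
      -- (t7)
      s (br x y) z + br (c x y) z
        = -br x (c y z) + br x (s y z) + s x (br y z) - br y (s x z) ∧
      -- (t8)
      c (br x y) z + br (c x y) z
        = c x (br y z) - (br y (c x z) + c y (br x z) - s y (br x z)) ∧
      -- (t9)
      br (s x y) z = -br x (c y z) + s x (br y z) - (br y (c x z) - s y (br x z)))
    ↔
    (∀ x y z : V,
      -- (m1)
      c (c x y) z = 0 ∧ c x (c y z) = 0 ∧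
      -- (m2)
      br (c x y) z = -br x (c y z) ∧ br x (c y z) = -br y (c x z) ∧
      -- (m3)
      c (br x y) z + br (c x y) z
        = c x (br y z) - br y (c x z) - c y (br x z)) := by
  constructor
  · intro h x y z
    obtain ⟨t1, t2, t3, t4, t5, t6, t7, t8, t9⟩ := h x y z
    simp only [hs, map_zero, LinearMap.zero_apply, smul_zero, add_zero, zero_add,
      sub_zero, zero_sub, neg_neg, neg_zero] at t1 t2 t3 t7 t8 t9
    have e1 : c x (c y z) = c y (c x z) := by
      rw [t1] at t2; exact neg_injective t2
    rw [← e1] at t3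
    rw [eq_comm, ← neg_add, neg_eq_zero] at t3
    have h2' : c x (c y z) + c x (c y z) = 0 := t3
    have h2 : c x (c y z) = 0 := by
      have h2s : (2:ℂ) • c x (c y z) = 0 := (two_smul ℂ _).trans h2'
      simpa using (smul_eq_zero.mp h2s)
    have hy : c y (c x z) = 0 := e1 ▸ h2
    have h1 : c (c x y) z = 0 := by rw [t1, h2, neg_zero]
    refine ⟨h1, h2, t7, ?_, ?_⟩
    · linear_combination (norm := abel) t9
    · linear_combination (norm := abel) t8
  · intro h x y z
    obtain ⟨m1a, m1b, m2a, m2b, m3⟩ := h x y z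
    obtain ⟨_, hy, _, _, _⟩ := h y x z
    simp only [hs, map_zero, LinearMap.zero_apply, smul_zero, add_zero, zero_add,
      sub_zero, zero_sub, neg_zero, neg_neg]
    refine ⟨?_, ?_, ?_, ?_, ?_, ?_, ?_, ?_, ?_⟩
    · rw [m1a, m1b, neg_zero]
    · rw [m1a, hy, neg_zero]
    · rw [m1b, hy]; abel
    · trivial
    · trivial
    · trivial
    · exact m2a
    · linear_combination (norm := abel) m3
    · linear_combination (norm := abel) m2b
end

section
/- Let (A,·) be a commutative associative algebra and P: A → A a linear averaging operator, i.e., P(P(x)·y) = P(x)·P(y) for all x,y ∈ A. Define x∘y := P(x)·y. Then (A,∘) is an associative Novikov algebra: (x∘y)∘z = x∘(y∘z) = y∘(x∘z) for all x,y,z ∈ A. -/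
/-- If `P` is an averaging operator on a commutative associative algebra `A`,
then `x ∘ y := P x * y` makes `A` an associative Novikov algebra. -/
theorem averaging_gives_assoc_novikov {A : Type*} [CommRing A] [Algebra ℂ A]
    (P : A →ₗ[ℂ] A) (hP : ∀ x y : A, P (P x * y) = P x * P y)
    (circ : A → A → A) (hcirc : ∀ x y : A, circ x y = P x * y) :
    ∀ x y z : A, circ (circ x y) z = circ x (circ y z) ∧
      circ x (circ y z) = circ y (circ x z) := by
  intro x y z
  simp only [hcirc, hP]
  constructor
  · ring
  · ring
end

section
/- Let A = ℂL ⊕ ℂW with L∘L = L∘W = 0, W∘L = L, W∘W = W. A bilinear bracket [·,·] on A makes (A,∘,[·,·]) an ass-Nov-Leibniz algebra if and only if there exist a,b ∈ ℂ such that [L,L] = [L,W] = 0, [W,L] = aL, [W,W] = bL. -/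
/-- Example 3.17: classification of the Leibniz brackets making the
2-dimensional associative Novikov algebra `A = ℂL ⊕ ℂW` (with `L∘L = L∘W = 0`,
`W∘L = L`, `W∘W = W`) into an ass-Nov-Leibniz algebra. -/
theorem two_dim_ass_nov_leibniz_classification
    (circ br : (ℂ × ℂ) →ₗ[ℂ] (ℂ × ℂ) →ₗ[ℂ] (ℂ × ℂ))
    (L W : ℂ × ℂ) (hL : L = (1, 0)) (hW : W = (0, 1))
    (hLL : circ L L = 0) (hLW : circ L W = 0)
    (hWL : circ W L = L) (hWW : circ W W = W) :
    ((∀ x y z : ℂ × ℂ,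
        -- (r1)
        circ (circ x y) z = circ x (circ y z) ∧
        -- (r2)
        circ x (circ y z) = circ y (circ x z) ∧
        -- left Leibniz identity
        br x (br y z) = br (br x y) z + br y (br x z) ∧
        -- (r3)
        (2:ℂ) • circ x (br y z) = br (circ x y) z + br y (circ x z) ∧
        -- (r4)
        (2:ℂ) • circ (br x y) z = br x (circ y z) - br y (circ x z) ∧
        -- (r5)
        circ (br x y) z = -circ x (br y z) + circ y (br x z))
    ↔ (∃ a b : ℂ, br L L = 0 ∧ br L W = 0 ∧ br W L = a • L ∧ br W W = b • L)) := by
  have hx : ∀ v : ℂ × ℂ, v = v.1 • L + v.2 • W := by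
    intro v; simp [hL, hW, Prod.ext_iff]
  have hc : ∀ x y : ℂ × ℂ, circ x y = (x.2 * y.1, x.2 * y.2) := by
    intro x y
    conv_lhs => rw [hx x, hx y]
    simp only [map_add, map_smul, LinearMap.add_apply, LinearMap.smul_apply,
      hLL, hLW, hWL, hWW, smul_zero, add_zero, zero_add]
    simp [hL, hW, Prod.ext_iff, smul_eq_mul, mul_comm]
  constructor
  · intro h
    have e1 := (h L W W).2.2.2.2.1
    have e2 := (h L W L).2.2.2.2.2
    have e3 := (h W L L).2.2.2.2.2
    have e4 := (h W W L).2.2.2.2.1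
    simp [hc, hL, hW, hLL, hLW, hWL, hWW, Prod.ext_iff, smul_eq_mul,
      show ((0:ℂ), (0:ℂ)) = (0 : ℂ × ℂ) from rfl] at e1 e2 e3 e4
    obtain ⟨e1a, e1b⟩ := e1
    obtain ⟨e2a, e2b⟩ := e2
    obtain ⟨e3a, e3b⟩ := e3
    have hq2 : ((br (1,0)) (0,1)).2 = 0 := by linear_combination e1b
    have hp1 : ((br (1,0)) (1,0)).1 = 0 := by rw [← e2a, hq2]
    refine ⟨((br (0,1)) (1,0)).1, ((br (0,1)) (0,1)).1, ?_, ?_, ?_, ?_⟩ <;>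
      simp only [hL, hW, Prod.ext_iff, Prod.smul_def, smul_eq_mul, Prod.fst_zero,
        Prod.snd_zero, mul_one, mul_zero]
    · exact ⟨hp1, e3b⟩
    · exact ⟨e1a.symm, hq2⟩
    · refine ⟨trivial, ?_⟩; rw [e3a, hp1, neg_zero]
    · exact ⟨trivial, e4⟩
  · rintro ⟨a, b, h1, h2, h3, h4⟩
    have hb : ∀ x y : ℂ × ℂ, br x y = (x.2 * (a * y.1 + b * y.2), 0) := by
      intro x y
      conv_lhs => rw [hx x, hx y]
      simp only [map_add, map_smul, LinearMap.add_apply, LinearMap.smul_apply,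
        h1, h2, h3, h4, smul_zero, add_zero, zero_add, smul_smul]
      simp [hL, Prod.ext_iff, smul_eq_mul]
      ring
    intro x y z
    refine ⟨?_, ?_, ?_, ?_, ?_, ?_⟩ <;>
      simp [hc, hb, Prod.ext_iff, smul_eq_mul] <;> (try constructor) <;> (try ring)
end

section
/- Let (V,∘,[·,·]) be an ass-Nov-Leibniz algebra. Then the vector space V ⊗ ℂ[t,t⁻¹], with bracket [a⊗tᵐ, b⊗tⁿ] := (m-n)(b∘a)⊗t^{m+n-1} + [b,a]⊗t^{m+n}, is a Leibniz algebra, i.e., satisfies [X,[Y,Z]] = [[X,Y],Z] - [[X,Z],Y]. -/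
open Finsupp

/-- The coefficient algebra of the quadratic Leibniz conformal algebra attached
to an ass-Nov-Leibniz algebra `(V, ∘, [·,·])`: the free module `V ⊗ ℂ[t,t⁻¹]`
(modelled as `ℤ →₀ V`) with bracket
`[a⊗tᵐ, b⊗tⁿ] = (m-n)(b∘a)⊗t^{m+n-1} + [b,a]⊗t^{m+n}` is a (right) Leibniz
algebra. -/
theorem coeff_of_ass_nov_leibniz_is_leibniz {V : Type*} [AddCommGroup V] [Module ℂ V]
    (circ br : V →ₗ[ℂ] V →ₗ[ℂ] V)
    -- associative Novikov axioms
    (h1 : ∀ x y z : V, circ (circ x y) z = circ x (circ y z))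
    (h2 : ∀ x y z : V, circ x (circ y z) = circ y (circ x z))
    -- left Leibniz identity
    (hLeib : ∀ x y z : V, br x (br y z) = br (br x y) z + br y (br x z))
    -- compatibility conditions (r3)-(r5)
    (h3 : ∀ x y z : V, (2:ℂ) • circ x (br y z) = br (circ x y) z + br y (circ x z))
    (h4 : ∀ x y z : V, (2:ℂ) • circ (br x y) z = br x (circ y z) - br y (circ x z))
    (h5 : ∀ x y z : V, circ (br x y) z = -circ x (br y z) + circ y (br x z))
    -- the bilinear bracket on V ⊗ ℂ[t,t⁻¹]
    (B : (ℤ →₀ V) →ₗ[ℂ] (ℤ →₀ V) →ₗ[ℂ] (ℤ →₀ V))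
    (hB : ∀ (m n : ℤ) (a b : V),
      B (single m a) (single n b)
        = single (m + n - 1) ((m - n) • circ b a) + single (m + n) (br b a)) :
    ∀ X Y Z : ℤ →₀ V, B X (B Y Z) = B (B X Y) Z - B (B X Z) Y := by
  -- the key computation on basis elements
  have key : ∀ (m n p : ℤ) (a b c : V),
      B (single m a) (B (single n b) (single p c))
        = B (B (single m a) (single n b)) (single p c)
          - B (B (single m a) (single p c)) (single n b) := by
    intro m n p a b c
    rw [hB n p, hB m n, hB m p]
    simp only [map_add, LinearMap.add_apply, hB, map_zsmul, LinearMap.smul_apply,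
      smul_smul]
    have i1 : m + (n + p - 1) - 1 = m + n + p - 2 := by ring
    have i2 : m + (n + p - 1) = m + n + p - 1 := by ring
    have i3 : m + (n + p) - 1 = m + n + p - 1 := by ring
    have i4 : m + (n + p) = m + n + p := by ring
    have i5 : m + n - 1 + p - 1 = m + n + p - 2 := by ring
    have i6 : m + n - 1 + p = m + n + p - 1 := by ring
    have i7 : m + n + p - 1 - 1 = m + n + p - 2 := by ring
    have i9 : m + p - 1 + n - 1 = m + n + p - 2 := by ring
    have i10 : m + p - 1 + n = m + n + p - 1 := by ring
    have i11 : m + p + n - 1 = m + n + p - 1 := by ring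
    have i12 : m + p + n = m + n + p := by ring
    simp only [i1, i2, i3, i4, i5, i6, i7, i9, i10, i11, i12]
    ext q
    simp only [Finsupp.add_apply, Finsupp.sub_apply, Finsupp.single_apply]
    by_cases hq1 : m + n + p - 2 = q
    · have d2 : ¬ (m + n + p - 1 = q) := by omega
      have d3 : ¬ (m + n + p = q) := by omega
      simp only [if_pos hq1, if_neg d2, if_neg d3, add_zero, zero_add, sub_zero]
      have e1 := h1 c b a
      have e2 := h2 c b a
      linear_combination (norm := module)
        (((m - (n + p - 1)) * (n - p) : ℤ) : ℂ) • e1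
          - (((m + p - 1 - n) * (m - p) : ℤ) : ℂ) • e2
    · by_cases hq2 : m + n + p - 1 = q
      · have d3 : ¬ (m + n + p = q) := by omega
        simp only [if_pos hq2, if_neg hq1, if_neg d3, add_zero, zero_add, sub_zero]
        have e3 := h3 c b a
        have e4 := h4 c b a
        have e5 := h5 c b a
        linear_combination (norm := module)
          (((p - n : ℤ)) : ℂ) • e3 + (((m - n : ℤ)) : ℂ) • e4
            + (((n - m - p : ℤ)) : ℂ) • e5
      · by_cases hq3 : m + n + p = q
        · simp only [if_pos hq3, if_neg hq1, if_neg hq2, add_zero, zero_add, sub_zero]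
          linear_combination (norm := module) (-1 : ℂ) • hLeib c b a
        · simp only [if_neg hq1, if_neg hq2, if_neg hq3, add_zero, zero_add, sub_zero]
  -- now extend to all of `ℤ →₀ V` by linearity
  intro X Y Z
  induction X using Finsupp.induction_linear with
  | zero => simp
  | add X₁ X₂ hX₁ hX₂ =>
    simp only [map_add, LinearMap.add_apply, hX₁, hX₂]; abel
  | single m a =>
    induction Y using Finsupp.induction_linear with
    | zero => simp
    | add Y₁ Y₂ hY₁ hY₂ =>
      simp only [map_add, LinearMap.add_apply, hY₁, hY₂]; abel
    | single n b =>
      induction Z using Finsupp.induction_linear with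
      | zero => simp
      | add Z₁ Z₂ hZ₁ hZ₂ =>
        simp only [map_add, LinearMap.add_apply, hZ₁, hZ₂]; abel
      | single p c => exact key m n p a b c
end

section
/- Let (V,∘) be an associative Novikov algebra. Then the vector space V ⊗ ℂ[t,t⁻¹] with bracket [a⊗tᵐ, b⊗tⁿ] := (m-n)(b∘a)⊗t^{m+n-1} is a (right) Leibniz algebra. Moreover, if ∘ is not commutative, this Leibniz algebra is not a Lie algebra (the bracket is not antisymmetric). -/
open Finsupp

/-- For an associative Novikov algebra `(V, ∘)`, the space `V ⊗ ℂ[t,t⁻¹]`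
(modelled as `ℤ →₀ V`) with bracket `[a⊗tᵐ, b⊗tⁿ] = (m-n)(b∘a)⊗t^{m+n-1}` is a
(right) Leibniz algebra, and if `∘` is not commutative, the bracket is not
antisymmetric, so it is not a Lie algebra. -/
theorem coeff_of_assoc_novikov_is_leibniz_not_lie {V : Type*} [AddCommGroup V] [Module ℂ V]
    (circ : V →ₗ[ℂ] V →ₗ[ℂ] V)
    (h1 : ∀ x y z : V, circ (circ x y) z = circ x (circ y z))
    (h2 : ∀ x y z : V, circ x (circ y z) = circ y (circ x z))
    (B : (ℤ →₀ V) →ₗ[ℂ] (ℤ →₀ V) →ₗ[ℂ] (ℤ →₀ V))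
    (hB : ∀ (m n : ℤ) (a b : V),
      B (single m a) (single n b) = single (m + n - 1) ((m - n) • circ b a)) :
    (∀ X Y Z : ℤ →₀ V, B X (B Y Z) = B (B X Y) Z - B (B X Z) Y) ∧
    (¬(∀ x y : V, circ x y = circ y x) →
      ∃ X Y : ℤ →₀ V, B X Y ≠ -B Y X) := by
  constructor
  · -- single case
    have key : ∀ (m n p : ℤ) (a b c : V),
        B (single m a) (B (single n b) (single p c)) =
        B (B (single m a) (single n b)) (single p c) -
        B (B (single m a) (single p c)) (single n b) := by
      intro m n p a b c
      rw [hB n p, hB m n, hB m p, hB m (n + p - 1), hB (m + n - 1) p, hB (m + p - 1) n]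
      have e1 : m + (n + p - 1) - 1 = m + n + p - 2 := by ring
      have e2 : m + n - 1 + p - 1 = m + n + p - 2 := by ring
      have e3 : m + p - 1 + n - 1 = m + n + p - 2 := by ring
      rw [e1, e2, e3, ← Finsupp.single_sub]
      congr 1
      rw [map_zsmul, LinearMap.smul_apply, map_zsmul, map_zsmul, h1, h2 b c a,
        smul_smul, smul_smul, smul_smul, ← sub_smul]
      congr 1
      ring
    intro X Y Z
    induction X using Finsupp.induction_linear with
    | zero => simp
    | add f g hf hg =>
      simp only [map_add, LinearMap.add_apply, hf, hg]; abel
    | single m a =>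
      induction Y using Finsupp.induction_linear with
      | zero => simp
      | add f g hf hg =>
        simp only [map_add, LinearMap.add_apply, hf, hg]; abel
      | single n b =>
        induction Z using Finsupp.induction_linear with
        | zero => simp
        | add f g hf hg =>
          simp only [map_add, LinearMap.add_apply, hf, hg]; abel
        | single p c => exact key m n p a b c
  · intro h
    push_neg at h
    obtain ⟨x, y, hxy⟩ := h
    refine ⟨single 1 y, single 0 x, ?_⟩
    rw [hB 1 0, hB 0 1]
    intro hc
    apply hxy
    have := DFunLike.congr_fun hc 0
    norm_num [Finsupp.single_eq_same] at this
    exact this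
end

section
/- The Leibniz superalgebra structure on Coeff(R_{a,b}): the vector space spanned by {L_n, W_n : n ∈ ℤ} with products [L_m,L_n] = [W_n,L_m] = 0, [L_m,W_n] = (m-n)L_{m+n-1} + aL_{m+n}, [W_m,W_n] = (m-n)W_{m+n-1} + bL_{m+n} is a (right) Leibniz algebra for all a,b ∈ ℂ, and it is not a Lie algebra (the bracket is not antisymmetric). -/
open Finsupp

/-- The coefficient algebra `Coeff(R_{a,b})`: the free `ℂ`-module on symbols
`L_n, W_n` (`n ∈ ℤ`) with `[L_m,L_n] = [W_n,L_m] = 0`,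
`[L_m,W_n] = (m-n)L_{m+n-1} + aL_{m+n}`,
`[W_m,W_n] = (m-n)W_{m+n-1} + bL_{m+n}` is a (right) Leibniz algebra, and its
bracket is not antisymmetric (so it is not a Lie algebra). -/
theorem coeff_Rab_is_leibniz_not_lie (a b : ℂ)
    (B : ((Fin 2 × ℤ) →₀ ℂ) →ₗ[ℂ] ((Fin 2 × ℤ) →₀ ℂ) →ₗ[ℂ] ((Fin 2 × ℤ) →₀ ℂ))
    (L W : ℤ → (Fin 2 × ℤ) →₀ ℂ)
    (hLdef : ∀ n : ℤ, L n = single (0, n) 1)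
    (hWdef : ∀ n : ℤ, W n = single (1, n) 1)
    (hLL : ∀ m n : ℤ, B (L m) (L n) = 0)
    (hWL : ∀ m n : ℤ, B (W n) (L m) = 0)
    (hLW : ∀ m n : ℤ, B (L m) (W n)
      = ((m : ℂ) - (n : ℂ)) • L (m + n - 1) + a • L (m + n))
    (hWW : ∀ m n : ℤ, B (W m) (W n)
      = ((m : ℂ) - (n : ℂ)) • W (m + n - 1) + b • L (m + n)) :
    (∀ X Y Z : (Fin 2 × ℤ) →₀ ℂ, B X (B Y Z) = B (B X Y) Z - B (B X Z) Y) ∧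
    (∃ X Y : (Fin 2 × ℤ) →₀ ℂ, B X Y ≠ -B Y X) := by
  have htwo : ∀ i : Fin 2, i = 0 ∨ i = 1 := by decide
  have hsing : ∀ (i : Fin 2) (m : ℤ) (c : ℂ),
      (single (i, m) c : (Fin 2 × ℤ) →₀ ℂ) = c • L m ∨
      (single (i, m) c : (Fin 2 × ℤ) →₀ ℂ) = c • W m := by
    intro i m c
    rcases htwo i with h | h <;> subst h
    · left; rw [hLdef, smul_single, smul_eq_mul, mul_one]
    · right; rw [hWdef, smul_single, smul_eq_mul, mul_one]
  -- B x (L n) = 0 for every x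
  have hXL : ∀ (x : (Fin 2 × ℤ) →₀ ℂ) (n : ℤ), B x (L n) = 0 := by
    intro x n
    induction x using Finsupp.induction_linear with
    | zero => simp
    | add f g hf hg => simp [hf, hg]
    | single p c =>
      obtain ⟨i, m⟩ := p
      rcases hsing i m c with h | h <;> rw [h, map_smul, LinearMap.smul_apply]
      · rw [hLL, smul_zero]
      · rw [hWL, smul_zero]
  refine ⟨?_, ?_⟩
  · -- Leibniz identity on basis vectors
    have key : ∀ (U V T : ℤ → (Fin 2 × ℤ) →₀ ℂ),
        (U = L ∨ U = W) → (V = L ∨ V = W) → (T = L ∨ T = W) →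
        ∀ (m n p : ℤ),
        B (U m) (B (V n) (T p)) = B (B (U m) (V n)) (T p) - B (B (U m) (T p)) (V n) := by
      rintro U V T (rfl | rfl) (rfl | rfl) (rfl | rfl) m n p
      · simp [hXL, hLL, hWL, hLW, hWW, map_add, map_smul]
      · simp [hXL, hLL, hWL, hLW, hWW, map_add, map_smul]
      · simp [hXL, hLL, hWL, hLW, hWW, map_add, map_smul]
      · simp only [hLL, hWL, hLW, hWW, map_add, map_smul, LinearMap.add_apply,
          LinearMap.smul_apply, hXL, smul_zero, add_zero, zero_add, smul_add]
        push_cast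
        ring_nf
        module
      · simp [hXL, hLL, hWL, hLW, hWW, map_add, map_smul]
      · simp [hXL, hLL, hWL, hLW, hWW, map_add, map_smul]
      · simp [hXL, hLL, hWL, hLW, hWW, map_add, map_smul]
      · simp only [hLL, hWL, hLW, hWW, map_add, map_smul, LinearMap.add_apply,
          LinearMap.smul_apply, hXL, smul_zero, add_zero, zero_add, smul_add]
        push_cast
        ring_nf
        module
    intro X Y Z
    induction X using Finsupp.induction_linear with
    | zero => simp
    | add f g hf hg => simp only [map_add, LinearMap.add_apply, hf, hg]; module
    | single q c =>
      obtain ⟨i, m⟩ := q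
      induction Y using Finsupp.induction_linear with
      | zero => simp
      | add f g hf hg =>
        simp only [map_add, LinearMap.add_apply] at hf hg ⊢
        rw [hf, hg]; module
      | single r d =>
        obtain ⟨j, n⟩ := r
        induction Z using Finsupp.induction_linear with
        | zero => simp
        | add f g hf hg =>
          simp only [map_add, LinearMap.add_apply] at hf hg ⊢
          rw [hf, hg]; module
        | single s e =>
          obtain ⟨k, p⟩ := s
          rcases hsing i m c with h1 | h1 <;> rcases hsing j n d with h2 | h2 <;>
            rcases hsing k p e with h3 | h3 <;>
          · rw [h1, h2, h3]
            simp only [map_smul, LinearMap.smul_apply]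
            rw [key _ _ _ (by tauto) (by tauto) (by tauto) m n p]
            module
  · refine ⟨L 1, W 0, ?_⟩
    rw [hLW, hWL, hLdef, hLdef]
    intro h
    have := DFunLike.congr_fun h ((0 : Fin 2), 0)
    simp [Finsupp.single_apply] at this
end

section
/- Let (V,∘) be an associative Novikov algebra and α₃ a bilinear form on V satisfying α₃(a, c∘b) = α₃(b∘a, c) = α₃(c∘a, b) for all a,b,c ∈ V. Then φ₃ defined on (V ⊗ ℂ[t,t⁻¹])² by φ₃(a⊗tᵐ, b⊗tⁿ) := m(m-1)(m-2)α₃(a,b)δ_{m+n-2,0} is a 2-cocycle of the Leibniz algebra V ⊗ ℂ[t,t⁻¹] with bracket [a⊗tᵐ, b⊗tⁿ] = (m-n)(b∘a)⊗t^{m+n-1}; i.e., φ₃(X,[Y,Z]) = φ₃([X,Y],Z) - φ₃([X,Z],Y) for all X,Y,Z. -/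
open Finsupp

/-- Corollary 4.7 (the `φ₃` part, non-super, trivial bracket): if `α₃` satisfies
`α₃(a, c∘b) = α₃(b∘a, c) = α₃(c∘a, b)`, then
`φ₃(a⊗tᵐ, b⊗tⁿ) = m(m-1)(m-2)α₃(a,b)δ_{m+n-2,0}` is a 2-cocycle of the Leibniz
algebra `V ⊗ ℂ[t,t⁻¹]` with bracket `[a⊗tᵐ, b⊗tⁿ] = (m-n)(b∘a)⊗t^{m+n-1}`. -/
theorem phi3_is_two_cocycle {V : Type*} [AddCommGroup V] [Module ℂ V]
    (circ : V →ₗ[ℂ] V →ₗ[ℂ] V)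
    (h1 : ∀ x y z : V, circ (circ x y) z = circ x (circ y z))
    (h2 : ∀ x y z : V, circ x (circ y z) = circ y (circ x z))
    (a3 : V →ₗ[ℂ] V →ₗ[ℂ] ℂ)
    (h3 : ∀ a b c : V,
      a3 a (circ c b) = a3 (circ b a) c ∧ a3 (circ b a) c = a3 (circ c a) b)
    (B : (ℤ →₀ V) →ₗ[ℂ] (ℤ →₀ V) →ₗ[ℂ] (ℤ →₀ V))
    (hB : ∀ (m n : ℤ) (a b : V),
      B (single m a) (single n b) = single (m + n - 1) ((m - n) • circ b a))
    (φ : (ℤ →₀ V) →ₗ[ℂ] (ℤ →₀ V) →ₗ[ℂ] ℂ)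
    (hφ : ∀ (m n : ℤ) (a b : V),
      φ (single m a) (single n b)
        = if m + n - 2 = 0 then (m : ℂ) * ((m : ℂ) - 1) * ((m : ℂ) - 2) * a3 a b
          else 0) :
    ∀ X Y Z : ℤ →₀ V, φ X (B Y Z) = φ (B X Y) Z - φ (B X Z) Y := by
  intro X Y Z
  induction X using Finsupp.induction_linear with
  | zero => simp
  | add f g hf hg => simp only [map_add, LinearMap.add_apply, hf, hg]; ring
  | single m a =>
  induction Y using Finsupp.induction_linear with
  | zero => simp
  | add f g hf hg => simp only [map_add, LinearMap.add_apply, hf, hg]; ring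
  | single n b =>
  induction Z using Finsupp.induction_linear with
  | zero => simp
  | add f g hf hg => simp only [map_add, LinearMap.add_apply, hf, hg]; ring
  | single p c =>
  rw [hB, hB, hB, ← smul_single, ← smul_single, ← smul_single,
    map_zsmul (φ (single m a)), map_zsmul φ, map_zsmul φ, LinearMap.smul_apply,
    LinearMap.smul_apply, hφ, hφ, hφ]
  by_cases h : m + n + p - 3 = 0
  · rw [if_pos (by omega), if_pos (by omega), if_pos (by omega)]
    have hC : (m : ℂ) + n + p - 3 = 0 := by exact_mod_cast congrArg (Int.cast : ℤ → ℂ) h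
    have hp : (p : ℂ) = 3 - m - n := by linear_combination hC
    obtain ⟨e1, e2⟩ := h3 a b c
    rw [e1, e2]
    simp only [zsmul_eq_mul]
    push_cast
    rw [hp]
    ring
  · rw [if_neg (by omega), if_neg (by omega), if_neg (by omega)]
    simp
end

section
/- Let (V,∘) be an associative Novikov algebra and α₁ a bilinear form on V satisfying α₁(a, c∘b) = α₁(b∘a, c) = α₁(c∘a, b) for all a,b,c ∈ V. Then φ₁ defined by φ₁(a⊗tᵐ, b⊗tⁿ) := m·α₁(a,b)δ_{m+n,0} is a 2-cocycle of the Leibniz algebra V ⊗ ℂ[t,t⁻¹] with bracket [a⊗tᵐ, b⊗tⁿ] = (m-n)(b∘a)⊗t^{m+n-1}. -/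
open Finsupp

/-- Corollary 4.7 (the `φ₁` part, non-super, trivial bracket): if `α₁` satisfies
`α₁(a, c∘b) = α₁(b∘a, c) = α₁(c∘a, b)`, then
`φ₁(a⊗tᵐ, b⊗tⁿ) = m·α₁(a,b)δ_{m+n,0}` is a 2-cocycle of the Leibniz
algebra `V ⊗ ℂ[t,t⁻¹]` with bracket `[a⊗tᵐ, b⊗tⁿ] = (m-n)(b∘a)⊗t^{m+n-1}`. -/
theorem phi1_is_two_cocycle {V : Type*} [AddCommGroup V] [Module ℂ V]
    (circ : V →ₗ[ℂ] V →ₗ[ℂ] V)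
    (h1 : ∀ x y z : V, circ (circ x y) z = circ x (circ y z))
    (h2 : ∀ x y z : V, circ x (circ y z) = circ y (circ x z))
    (a1 : V →ₗ[ℂ] V →ₗ[ℂ] ℂ)
    (h3 : ∀ a b c : V,
      a1 a (circ c b) = a1 (circ b a) c ∧ a1 (circ b a) c = a1 (circ c a) b)
    (B : (ℤ →₀ V) →ₗ[ℂ] (ℤ →₀ V) →ₗ[ℂ] (ℤ →₀ V))
    (hB : ∀ (m n : ℤ) (a b : V),
      B (single m a) (single n b) = single (m + n - 1) ((m - n) • circ b a))
    (φ : (ℤ →₀ V) →ₗ[ℂ] (ℤ →₀ V) →ₗ[ℂ] ℂ)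
    (hφ : ∀ (m n : ℤ) (a b : V),
      φ (single m a) (single n b)
        = if m + n = 0 then (m : ℂ) * a1 a b
          else 0) :
    ∀ X Y Z : ℤ →₀ V, φ X (B Y Z) = φ (B X Y) Z - φ (B X Z) Y := by
  have key : ∀ (m n p : ℤ) (a b c : V),
      φ (single m a) (B (single n b) (single p c))
        = φ (B (single m a) (single n b)) (single p c)
          - φ (B (single m a) (single p c)) (single n b) := by
    intro m n p a b c
    rw [hB, hB, hB, hφ, hφ, hφ]
    obtain ⟨e1, e2⟩ := h3 a b c
    rcases eq_or_ne (m + n + p) 1 with h | h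
    · rw [if_pos (by omega), if_pos (by omega), if_pos (by omega)]
      rw [map_zsmul, LinearMap.map_smul_of_tower, LinearMap.map_smul_of_tower,
        LinearMap.smul_apply, LinearMap.smul_apply]
      rw [e1, e2] at *
      have hc : (m : ℂ) + n + p = 1 := by exact_mod_cast congrArg (Int.cast : ℤ → ℂ) h
      simp only [zsmul_eq_mul, smul_eq_mul]
      push_cast
      linear_combination ((n : ℂ) - p) * a1 (circ c a) b * hc
    · rw [if_neg (by omega), if_neg (by omega), if_neg (by omega)]
      ring
  intro X Y Z
  induction X using Finsupp.induction_linear with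
  | zero => simp
  | add f g hf hg =>
      simp only [map_add, LinearMap.add_apply, hf, hg]; ring
  | single m a =>
    induction Y using Finsupp.induction_linear with
    | zero => simp
    | add f g hf hg =>
        simp only [map_add, LinearMap.add_apply, hf, hg]; ring
    | single n b =>
      induction Z using Finsupp.induction_linear with
      | zero => simp
      | add f g hf hg =>
          simp only [map_add, LinearMap.add_apply, hf, hg]; ring
      | single p c => exact key m n p a b c
end

section
/- Let (V,∘) be an associative Novikov algebra and α₀ a bilinear form on V satisfying α₀(a, c∘b) = -α₀(b∘a, c) = -α₀(c∘a, b) for all a,b,c ∈ V. Then φ₀ defined by φ₀(a⊗tᵐ, b⊗tⁿ) := α₀(a,b)δ_{m+n+1,0} is a 2-cocycle of the Leibniz algebra V ⊗ ℂ[t,t⁻¹] with bracket [a⊗tᵐ, b⊗tⁿ] = (m-n)(b∘a)⊗t^{m+n-1}. -/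
open Finsupp

/-- Corollary 4.7 (the `φ₀` part, non-super, trivial bracket): if `α₀` satisfies
`α₀(a, c∘b) = -α₀(b∘a, c) = -α₀(c∘a, b)`, then
`φ₀(a⊗tᵐ, b⊗tⁿ) = α₀(a,b)δ_{m+n+1,0}` is a 2-cocycle of the Leibniz algebra
`V ⊗ ℂ[t,t⁻¹]` with bracket `[a⊗tᵐ, b⊗tⁿ] = (m-n)(b∘a)⊗t^{m+n-1}`. -/
theorem phi0_is_two_cocycle {V : Type*} [AddCommGroup V] [Module ℂ V]
    (circ : V →ₗ[ℂ] V →ₗ[ℂ] V)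
    (h1 : ∀ x y z : V, circ (circ x y) z = circ x (circ y z))
    (h2 : ∀ x y z : V, circ x (circ y z) = circ y (circ x z))
    (a0 : V →ₗ[ℂ] V →ₗ[ℂ] ℂ)
    (h0 : ∀ a b c : V,
      a0 a (circ c b) = -a0 (circ b a) c ∧ a0 a (circ c b) = -a0 (circ c a) b)
    (B : (ℤ →₀ V) →ₗ[ℂ] (ℤ →₀ V) →ₗ[ℂ] (ℤ →₀ V))
    (hB : ∀ (m n : ℤ) (a b : V),
      B (single m a) (single n b) = single (m + n - 1) ((m - n) • circ b a))
    (φ : (ℤ →₀ V) →ₗ[ℂ] (ℤ →₀ V) →ₗ[ℂ] ℂ)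
    (hφ : ∀ (m n : ℤ) (a b : V),
      φ (single m a) (single n b) = if m + n + 1 = 0 then a0 a b else 0) :
    ∀ X Y Z : ℤ →₀ V, φ X (B Y Z) = φ (B X Y) Z - φ (B X Z) Y := by

  have key : ∀ (m n p : ℤ) (a b c : V),
      φ (single m a) (B (single n b) (single p c)) =
        φ (B (single m a) (single n b)) (single p c) -
          φ (B (single m a) (single p c)) (single n b) := by
    intro m n p a b c
    rw [hB, hB, hB, ← Finsupp.smul_single, ← Finsupp.smul_single, ← Finsupp.smul_single,
      map_zsmul, map_zsmul, map_zsmul, LinearMap.smul_apply, LinearMap.smul_apply,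
      hφ, hφ, hφ]
    by_cases h : m + n + p = 0
    · have c1 : m + (n + p - 1) + 1 = 0 := by omega
      have c2 : m + n - 1 + p + 1 = 0 := by omega
      have c3 : m + p - 1 + n + 1 = 0 := by omega
      simp only [c1, c2, c3, if_pos rfl, if_true]
      obtain ⟨e1, e2⟩ := h0 a b c
      have e1' : (a0 ((circ b) a)) c = -(a0 a) ((circ c) b) := by rw [e1, neg_neg]
      have e2' : (a0 ((circ c) a)) b = -(a0 a) ((circ c) b) := by rw [e2, neg_neg]
      rw [e1', e2']
      simp only [zsmul_eq_mul, smul_neg, mul_neg]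
      push_cast
      ring
    · have c1 : ¬(m + (n + p - 1) + 1 = 0) := by omega
      have c2 : ¬(m + n - 1 + p + 1 = 0) := by omega
      have c3 : ¬(m + p - 1 + n + 1 = 0) := by omega
      simp [c1, c2, c3]
  intro X Y Z
  induction X using Finsupp.induction_linear with
  | zero => simp
  | add f g hf hg => simp only [map_add, LinearMap.add_apply, hf, hg]; ring
  | single m a =>
    induction Y using Finsupp.induction_linear with
    | zero => simp
    | add f g hf hg => simp only [map_add, LinearMap.add_apply, hf, hg]; ring
    | single n b =>
      induction Z using Finsupp.induction_linear with
      | zero => simp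
      | add f g hf hg => simp only [map_add, LinearMap.add_apply, hf, hg]; ring
      | single p c => exact key m n p a b c
end

section
/- The space spanned by {L_n, W_n : n ∈ ℤ} ∪ {c} with bracket [L_m,L_n] = [W_n,L_m] = 0, [L_m,W_n] = (m-n)L_{m+n-1} + (mγδ_{m+n,0} + m(m-1)(m-2)βδ_{m+n-2,0})c, [W_m,W_n] = (m-n)W_{m+n-1} + (mγδ_{m+n,0} + m(m-1)(m-2)βδ_{m+n-2,0})c, and c central, is a (right) Leibniz algebra for all β, γ ∈ ℂ. -/
open Finsupp

/-- The central extension of `Coeff(R_{0,0})`: the free `ℂ`-module on symbols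
`L_n, W_n` (`n ∈ ℤ`) and a central element `c`, with
`[L_m,L_n] = [W_n,L_m] = 0`,
`[L_m,W_n] = (m-n)L_{m+n-1} + (mγδ_{m+n,0} + m(m-1)(m-2)βδ_{m+n-2,0})c`,
`[W_m,W_n] = (m-n)W_{m+n-1} + (mγδ_{m+n,0} + m(m-1)(m-2)βδ_{m+n-2,0})c`,
is a (right) Leibniz algebra for all `β, γ ∈ ℂ`. -/
theorem coeff_R00_central_extension_is_leibniz (β γ : ℂ)
    (B : (Option (Fin 2 × ℤ) →₀ ℂ) →ₗ[ℂ] (Option (Fin 2 × ℤ) →₀ ℂ) →ₗ[ℂ]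
      (Option (Fin 2 × ℤ) →₀ ℂ))
    (L W : ℤ → Option (Fin 2 × ℤ) →₀ ℂ) (c : Option (Fin 2 × ℤ) →₀ ℂ)
    (hLdef : ∀ n : ℤ, L n = single (some (0, n)) 1)
    (hWdef : ∀ n : ℤ, W n = single (some (1, n)) 1)
    (hcdef : c = single none 1)
    (coef : ℤ → ℤ → ℂ)
    (hcoef : ∀ m n : ℤ, coef m n
      = (if m + n = 0 then (m : ℂ) * γ else 0)
        + (if m + n - 2 = 0 then (m : ℂ) * ((m : ℂ) - 1) * ((m : ℂ) - 2) * β else 0))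
    (hLL : ∀ m n : ℤ, B (L m) (L n) = 0)
    (hWL : ∀ m n : ℤ, B (W n) (L m) = 0)
    (hLW : ∀ m n : ℤ, B (L m) (W n)
      = ((m : ℂ) - (n : ℂ)) • L (m + n - 1) + coef m n • c)
    (hWW : ∀ m n : ℤ, B (W m) (W n)
      = ((m : ℂ) - (n : ℂ)) • W (m + n - 1) + coef m n • c)
    (hcentral : ∀ X : Option (Fin 2 × ℤ) →₀ ℂ, B c X = 0 ∧ B X c = 0) :
    ∀ X Y Z : Option (Fin 2 × ℤ) →₀ ℂ, B X (B Y Z) = B (B X Y) Z - B (B X Z) Y := by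
  have hc1 : ∀ X, B c X = 0 := fun X => (hcentral X).1
  have hc2 : ∀ X, B X c = 0 := fun X => (hcentral X).2
  have basis : ∀ x : Option (Fin 2 × ℤ),
      (single x 1 : Option (Fin 2 × ℤ) →₀ ℂ) = c ∨
      (∃ n, (single x 1 : Option (Fin 2 × ℤ) →₀ ℂ) = L n) ∨
      (∃ n, (single x 1 : Option (Fin 2 × ℤ) →₀ ℂ) = W n) := by
    rintro (_ | ⟨i, n⟩)
    · exact Or.inl hcdef.symm
    · fin_cases i
      · exact Or.inr (Or.inl ⟨n, (hLdef n).symm⟩)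
      · exact Or.inr (Or.inr ⟨n, (hWdef n).symm⟩)
  have key : ∀ x y z : Option (Fin 2 × ℤ),
      B (single x 1) (B (single y 1) (single z 1)) =
        B (B (single x 1) (single y 1)) (single z 1) -
          B (B (single x 1) (single z 1)) (single y 1) := by
    intro x y z
    rcases basis x with hx | ⟨a, hx⟩ | ⟨a, hx⟩ <;>
      rcases basis y with hy | ⟨b, hy⟩ | ⟨b, hy⟩ <;>
        rcases basis z with hz | ⟨d, hz⟩ | ⟨d, hz⟩ <;>
          rw [hx, hy, hz] <;>
            simp only [hLL, hWL, hLW, hWW, hc1, hc2, map_zero, LinearMap.zero_apply,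
              map_add, map_smul, LinearMap.add_apply, LinearMap.smul_apply,
              smul_zero, add_zero, zero_add, sub_zero, zero_sub, sub_self, neg_zero]
    all_goals (
      rw [show a + (b + d - 1) - 1 = a + b + d - 2 from by ring,
          show a + b - 1 + d - 1 = a + b + d - 2 from by ring,
          show a + d - 1 + b - 1 = a + b + d - 2 from by ring]
      match_scalars
      · ring
      · rw [hcoef, hcoef, hcoef]
        push_cast
        split_ifs <;>
          first
            | (exfalso; omega)
            | ring1
            | (obtain rfl : d = 1 - a - b := by omega
               push_cast; ring1)
            | (obtain rfl : d = 3 - a - b := by omega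
               push_cast; ring1))
  intro X Y Z
  induction X using Finsupp.induction_linear with
  | zero => simp
  | add f g hf hg => simp only [map_add, LinearMap.add_apply, hf, hg]; abel
  | single p r =>
    induction Y using Finsupp.induction_linear with
    | zero => simp
    | add f g hf hg => simp only [map_add, LinearMap.add_apply, hf, hg]; abel
    | single q s =>
      induction Z using Finsupp.induction_linear with
      | zero => simp
      | add f g hf hg => simp only [map_add, LinearMap.add_apply, hf, hg]; abel
      | single t u =>
        rw [show (single p r : Option (Fin 2 × ℤ) →₀ ℂ) = r • single p 1 by simp,
            show (single q s : Option (Fin 2 × ℤ) →₀ ℂ) = s • single q 1 by simp,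
            show (single t u : Option (Fin 2 × ℤ) →₀ ℂ) = u • single t 1 by simp]
        simp only [map_smul, LinearMap.smul_apply, key p q t, smul_sub, smul_smul]
        module
end

section
/- Let V be a vector space with bilinear ∘, [·,·] and assume conditions (r1)-(r5) of an ass-Nov-Leibniz algebra hold. Then the ℂ[∂]-module R = ℂ[∂] ⊗ V with λ-bracket [x_λ y] := ∂⊗(y∘x) + 2λ(1⊗(y∘x)) + 1⊗[y,x] for x,y ∈ V (extended by conformal sesquilinearity) satisfies the Leibniz conformal identity [x_λ[y_μ z]] = [[x_λ y]_{λ+μ} z] - [[x_λ z]_{-μ-∂} y] for all x,y,z ∈ V. -/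
open MvPolynomial TensorProduct

/-- Substitution of the variable `∂ = X 2` by `t` in `ℂ[λ, μ, ∂]`
(with `λ = X 0`, `μ = X 1`, `∂ = X 2`). -/
noncomputable def subD (t p : MvPolynomial (Fin 3) ℂ) : MvPolynomial (Fin 3) ℂ :=
  aeval (fun i : Fin 3 => if i = 2 then t else X i) p

lemma subD_mul (t p q : MvPolynomial (Fin 3) ℂ) : subD t (p*q) = subD t p * subD t q := by
  simp [subD]

lemma subD_subD (s t p : MvPolynomial (Fin 3) ℂ) : subD s (subD t p) = subD (subD s t) p := by
  induction p using MvPolynomial.induction_on with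
  | C a => simp [subD]
  | add p q hp hq => simp [subD, map_add] at *; rw [hp, hq]
  | mul_X p i hp =>
    rw [subD_mul, subD_mul, subD_mul, hp]
    refine congrArg (subD (subD s t) p * ·) ?_
    fin_cases i <;> simp [subD]

/-- Theorem 3.2 / Corollary 3.4 direction: given an ass-Nov-Leibniz structure
`(V, ∘, [·,·])` (conditions (r1)-(r5) plus the left Leibniz identity), the free
`ℂ[∂]`-module `R = ℂ[∂] ⊗ V` (here embedded in `ℂ[λ,μ,∂] ⊗ V`) with λ-bracket
`[x_λ y] = ∂⊗(y∘x) + 2λ(1⊗(y∘x)) + 1⊗[y,x]`, extended by conformal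
sesquilinearity, satisfies the Leibniz conformal identity. -/
theorem quadratic_leibniz_conformal_of_ass_nov_leibniz
    {V : Type*} [AddCommGroup V] [Module ℂ V]
    (circ br : V →ₗ[ℂ] V →ₗ[ℂ] V)
    -- (r1), (r2)
    (h1 : ∀ x y z : V, circ (circ x y) z = circ x (circ y z))
    (h2 : ∀ x y z : V, circ x (circ y z) = circ y (circ x z))
    -- left Leibniz identity
    (hLeib : ∀ x y z : V, br x (br y z) = br (br x y) z + br y (br x z))
    -- (r3), (r4), (r5)
    (h3 : ∀ x y z : V, (2:ℂ) • circ x (br y z) = br (circ x y) z + br y (circ x z))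
    (h4 : ∀ x y z : V, (2:ℂ) • circ (br x y) z = br x (circ y z) - br y (circ x z))
    (h5 : ∀ x y z : V, circ (br x y) z = -circ x (br y z) + circ y (br x z))
    -- the ν-bracket on ℂ[λ,μ,∂] ⊗ V, for a formal parameter ν
    (Br : MvPolynomial (Fin 3) ℂ →
      (MvPolynomial (Fin 3) ℂ ⊗[ℂ] V) →ₗ[ℂ]
      (MvPolynomial (Fin 3) ℂ ⊗[ℂ] V) →ₗ[ℂ] (MvPolynomial (Fin 3) ℂ ⊗[ℂ] V))
    (hBr : ∀ (ν p q : MvPolynomial (Fin 3) ℂ) (x y : V),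
      Br ν (p ⊗ₜ[ℂ] x) (q ⊗ₜ[ℂ] y)
        = (subD (-ν) p * subD (ν + X 2) q) •
            ((X 2 + 2 * ν) ⊗ₜ[ℂ] circ y x + (1 : MvPolynomial (Fin 3) ℂ) ⊗ₜ[ℂ] br y x)) :
    ∀ X' Y' Z' : MvPolynomial (Fin 3) ℂ ⊗[ℂ] V,
      Br (X 0) X' (Br (X 1) Y' Z')
        = Br (X 0 + X 1) (Br (X 0) X' Y') Z'
          - Br (-(X 1) - X 2) (Br (X 0) X' Z') Y' := by
  have hBr' : ∀ (ν p q : MvPolynomial (Fin 3) ℂ) (x y : V),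
      Br ν (p ⊗ₜ[ℂ] x) (q ⊗ₜ[ℂ] y)
        = (subD (-ν) p * subD (ν + X 2) q * (X 2 + 2 * ν)) ⊗ₜ[ℂ] circ y x
          + (subD (-ν) p * subD (ν + X 2) q) ⊗ₜ[ℂ] br y x := by
    intro ν p q x y
    rw [hBr, smul_add, TensorProduct.smul_tmul', TensorProduct.smul_tmul', smul_eq_mul,
      smul_eq_mul, mul_one]
  have key : ∀ (p q r : MvPolynomial (Fin 3) ℂ) (x y z : V),
      Br (X 0) (p ⊗ₜ[ℂ] x) (Br (X 1) (q ⊗ₜ[ℂ] y) (r ⊗ₜ[ℂ] z))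
        = Br (X 0 + X 1) (Br (X 0) (p ⊗ₜ[ℂ] x) (q ⊗ₜ[ℂ] y)) (r ⊗ₜ[ℂ] z)
          - Br (-(X 1) - X 2) (Br (X 0) (p ⊗ₜ[ℂ] x) (r ⊗ₜ[ℂ] z)) (q ⊗ₜ[ℂ] y) := by
    intro p q r x y z
    rw [hBr' (X 1) q r y z, map_add, hBr', hBr',
        hBr' (X 0) p q x y, map_add, LinearMap.add_apply, hBr', hBr',
        hBr' (X 0) p r x z, map_add, LinearMap.add_apply, hBr', hBr']
    simp only [subD_mul, subD_subD]
    have ea : subD (X 0 + X 2) (-(X 1) : MvPolynomial (Fin 3) ℂ) = -(X 1) := by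
      simp [subD]
    have eb : subD (X 0 + X 2) (X 1 + X 2 : MvPolynomial (Fin 3) ℂ) = X 0 + X 1 + X 2 := by
      simp [subD, map_ofNat]; try ring
    have ec : subD (X 0 + X 2) (X 2 + 2 * X 1 : MvPolynomial (Fin 3) ℂ)
        = X 0 + X 2 + 2 * X 1 := by
      simp [subD, map_ofNat]; try ring
    have ed : subD (-(X 0 + X 1)) (-(X 0) : MvPolynomial (Fin 3) ℂ) = -(X 0) := by
      simp [subD]
    have ee : subD (-(X 0 + X 1)) (X 0 + X 2 : MvPolynomial (Fin 3) ℂ) = -(X 1) := by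
      simp [subD, map_ofNat]; try ring
    have ef : subD (-(X 0 + X 1)) (X 2 + 2 * X 0 : MvPolynomial (Fin 3) ℂ)
        = X 0 - X 1 := by
      simp [subD, map_ofNat]; try ring
    have eg : subD (-(-(X 1) - X 2)) (-(X 0) : MvPolynomial (Fin 3) ℂ) = -(X 0) := by
      simp [subD]
    have eh : subD (-(-(X 1) - X 2)) (X 0 + X 2 : MvPolynomial (Fin 3) ℂ)
        = X 0 + X 1 + X 2 := by
      simp [subD, map_ofNat]; try ring
    have ei : subD (-(-(X 1) - X 2)) (X 2 + 2 * X 0 : MvPolynomial (Fin 3) ℂ)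
        = X 1 + X 2 + 2 * X 0 := by
      simp [subD, map_ofNat]; try ring
    have ej : (-(X 1) - X 2 + X 2 : MvPolynomial (Fin 3) ℂ) = -(X 1) := by ring
    rw [ea, eb, ec, ed, ee, ef, eg, eh, ei, ej]
    have va1 : circ (circ z y) x = circ y (circ z x) := by rw [h1, h2]
    have va2 : br (circ z y) x
        = circ z (br y x) + circ z (br y x) - br y (circ z x) := by
      have h := h3 z y x; rw [two_smul ℂ] at h; rw [h]; abel
    have va4 : br (br z y) x = br z (br y x) - br y (br z x) := by
      rw [hLeib z y x]; abel
    have vb2 : br z (circ y x)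
        = (-circ z (br y x) + circ y (br z x)) + (-circ z (br y x) + circ y (br z x))
          + br y (circ z x) := by
      have h := h4 z y x; rw [two_smul ℂ, h5 z y x] at h
      rw [h]; abel
    rw [va1, va2, h5 z y x, va4, h2 z y x, vb2]
    simp only [TensorProduct.tmul_sub, TensorProduct.tmul_add, TensorProduct.tmul_neg]
    have ts : ∀ (P : MvPolynomial (Fin 3) ℂ) (v : V),
        P ⊗ₜ[ℂ] v = P • ((TensorProduct.mk ℂ (MvPolynomial (Fin 3) ℂ) V 1) v) := by
      intro P v
      simp [TensorProduct.smul_tmul']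
    simp only [ts]
    module
  intro A B C
  induction A using TensorProduct.induction_on with
  | zero => simp
  | add a b ha hb => simp only [map_add, LinearMap.add_apply, ha, hb]; abel
  | tmul p x =>
    induction B using TensorProduct.induction_on with
    | zero => simp
    | add a b ha hb => simp only [map_add, LinearMap.add_apply, ha, hb]; abel
    | tmul q y =>
      induction C using TensorProduct.induction_on with
      | zero => simp
      | add a b ha hb => simp only [map_add, LinearMap.add_apply, ha, hb]; abel
      | tmul r z => exact key p q r x y z
end
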